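/- Let x ∈ 𝐊 and let Y be an almost front of some B ∈ ℬ_x. Then D^x_Y is a proper filter on Y: Y ∈ D^x_Y, ∅ ∉ D^x_Y, D^x_Y is closed under intersections of two members, and if Z₁ ∈ D^x_Y and Z₁ ⊆ Z₂ ⊆ Y then Z₂ ∈ D^x_Y. -/

import Mathlib

open Set Cardinal

universe u

variable {α : Type u}

section OrderDefs

variable [PartialOrder α]

/-- `η` and `ν` are compatible in `M`: they have a common `≤`-upper bound in `M`. -/
def Compat (M : Set α) (η ν : α) : Prop :=
  ∃ ρ ∈ M, η ≤ ρ ∧ ν ≤ ρ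

/-- The set of immediate successors of `ν` inside `B`. -/
def succIn (B : Set α) (ν : α) : Set α :=
  {ρ ∈ B | ν < ρ ∧ ¬∃ σ ∈ B, ν < σ ∧ σ < ρ}

/-- The set of maximal elements of `B`. -/
def maxIn (B : Set α) : Set α :=
  {η ∈ B | ∀ ν ∈ B, ¬η < ν}

/-- `r` is the root (least element) of `B`. -/
def IsRoot (B : Set α) (r : α) : Prop :=
  r ∈ B ∧ ∀ x ∈ B, r ≤ x

/-- `B` is a countable well-founded subtree of `M`. -/
def CWT (M B : Set α) : Prop :=
  B ⊆ M ∧ B.Countable ∧ (∃ r, IsRoot B r) ∧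
  (∀ ν ∈ B, ∀ η ∈ B, ∀ ρ ∈ B, η ≤ ν → ρ ≤ ν → η ≤ ρ ∨ ρ ≤ η) ∧
  (∀ C, C ⊆ B → IsChain (· ≤ ·) C → C.Finite) ∧
  (∀ ν ∈ B, succIn B ν = ∅ ∨ (succIn B ν).Infinite) ∧
  (∀ η ∈ B, ∀ ν ∈ B, ¬η ≤ ν → ¬ν ≤ η → ¬Compat M η ν) ∧
  (∀ ν ∈ B \ maxIn B, ∀ F : Finset α, (F : Set α) ⊆ M \ {ρ | ρ ≤ ν} →
    {ϱ ∈ succIn B ν | ∀ ρ ∈ F, ¬Compat M ρ ϱ}.Infinite)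

/-- `Y` is a front of `B`: a maximal set of pairwise incomparable members of `B`. -/
def IsFront (B Y : Set α) : Prop :=
  Y ⊆ B ∧ (∀ η ∈ Y, ∀ ν ∈ Y, η ≠ ν → ¬η ≤ ν) ∧
  (∀ ν ∈ B, ∃ η ∈ Y, η ≤ ν ∨ ν ≤ η)

/-- `B'` is an exhaustive subtree of `B`. -/
def sb (M B B' : Set α) : Prop :=
  CWT M B' ∧ B' ⊆ B ∧ (∃ r, IsRoot B r ∧ IsRoot B' r) ∧
  ∀ ν ∈ B', succIn B' ν ⊆ succIn B ν ∧ (succIn B ν \ succIn B' ν).Finite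

/-- `B'` is a positive subtree of `B`. -/
def psb (M B B' : Set α) : Prop :=
  CWT M B' ∧ B' ⊆ B ∧ (∃ r, IsRoot B r ∧ IsRoot B' r) ∧
  ∀ ν ∈ B' \ maxIn B, (succIn B' ν).Infinite ∧ succIn B' ν ⊆ succIn B ν

/-- `Y` is an almost front of `B`: an antichain of `M` whose intersection with some
exhaustive subtree `B'` of `B` is a front of `B'`. -/
def IsAlmostFront (M B Y : Set α) : Prop :=
  Y ⊆ M ∧ (∀ η ∈ Y, ∀ ν ∈ Y, η ≠ ν → ¬η ≤ ν) ∧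
  ∃ B', sb M B B' ∧ IsFront B' (Y ∩ B')

/-- The relation `B₁ ≤*_M B₂`. -/
def leStar (M B₁ B₂ : Set α) : Prop :=
  CWT M B₁ ∧ CWT M B₂ ∧ (∃ r, IsRoot B₁ r ∧ IsRoot B₂ r) ∧
  ∃ B₂', sb M B₂ B₂' ∧ psb M B₁ (B₂' ∩ B₁) ∧
    ∀ Y, IsAlmostFront M (B₂' ∩ B₁) Y → IsAlmostFront M B₂ Y

end OrderDefs

section KDefs

variable (α) [PartialOrder α]

/-- A member of the class `𝐊`: a system of approximations to a system of ultrafilters. -/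
structure KSys where
  /-- the underlying set of the partial order `M_x` (the order is inherited from `α`) -/
  M : Set α
  /-- the root, i.e. the least element, of `M_x` -/
  rt : α
  rt_mem : rt ∈ M
  rt_least : ∀ a ∈ M, rt ≤ a
  /-- the system `⟨𝒜^x_η : η ∈ M_x⟩` -/
  A : α → Set (Set α)
  A_empty : ∀ η, η ∉ M → A η = ∅
  A_cwt : ∀ η ∈ M, ∀ B ∈ A η, CWT M B
  A_root : ∀ η ∈ M, ∀ B ∈ A η, IsRoot B η
  A_singleton : ∀ η ∈ M, {η} ∈ A η
  /-- the partial order `≤_x` on `ℬ_x = 𝒜^x_{rt} \ {{rt}}` -/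
  lex : Set α → Set α → Prop
  lex_mem : ∀ B₁ B₂, lex B₁ B₂ →
    B₁ ∈ A rt \ {({rt} : Set α)} ∧ B₂ ∈ A rt \ {({rt} : Set α)}
  lex_refl : ∀ B ∈ A rt \ {({rt} : Set α)}, lex B B
  lex_trans : ∀ B₁ B₂ B₃, lex B₁ B₂ → lex B₂ B₃ → lex B₁ B₃
  lex_antisymm : ∀ B₁ B₂, lex B₁ B₂ → lex B₂ B₁ → B₁ = B₂
  lex_directed : ∀ B₁ ∈ A rt \ {({rt} : Set α)}, ∀ B₂ ∈ A rt \ {({rt} : Set α)},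
    ∃ B₃ ∈ A rt \ {({rt} : Set α)}, lex B₁ B₃ ∧ lex B₂ B₃
  lex_leStar : ∀ B₁ B₂, lex B₁ B₂ → leStar M B₁ B₂
  A_restrict : ∀ η ∈ M, ∀ B ∈ A η, ∀ ν ∈ B, B ∩ {ρ | ν ≤ ρ} ∈ A ν

variable {α}

namespace KSys

/-- `ℬ_x = 𝒜^x_{rt_x} \ {{rt_x}}`. -/
def Bf (x : KSys α) : Set (Set α) :=
  x.A x.rt \ {({x.rt} : Set α)}

/-- The filter `D^x_Y` on an almost front `Y`. -/
def D (x : KSys α) (Y : Set α) : Set (Set α) :=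
  {Z | Z ⊆ Y ∧ ∃ B ∈ x.Bf, ∃ B', sb x.M B B' ∧ IsAlmostFront x.M B Y ∧ B' ∩ Y ⊆ Z}

/-- The ideal `id_x(ν,B)` on `suc_B(ν)`. -/
def idl (x : KSys α) (ν : α) (B : Set α) : Set (Set α) :=
  {C | C ⊆ succIn B ν ∧ ∃ F : Finset α, (F : Set α) ⊆ x.M \ {ρ | ν ≤ ρ} ∧
    ∀ ϱ ∈ C, ∃ ρ ∈ F, Compat x.M ϱ ρ}

/-- `‖x‖ = |M_x| + Σ {|𝒜^x_η| : η ∈ M_x}`. -/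
noncomputable def norm (x : KSys α) : Cardinal.{u} :=
  Cardinal.mk ↥x.M + Cardinal.sum fun η : ↥x.M => Cardinal.mk ↥(x.A ↑η)

end KSys

/-- The relation `x ≤_𝐊 y`. -/
def KLE (x y : KSys α) : Prop :=
  x.M ⊆ y.M ∧
  (∀ η ∈ x.M, ∀ ν ∈ x.M, (Compat x.M η ν ↔ Compat y.M η ν)) ∧
  (∀ η ∈ x.M, x.A η ⊆ y.A η) ∧
  y.rt = x.rt ∧
  (∀ B₁ ∈ x.Bf, ∀ B₂ ∈ x.Bf, (x.lex B₁ B₂ ↔ y.lex B₁ B₂))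

end KDefs


section AuxLemmas
variable [PartialOrder α]

-- AUX LEMMAS

lemma root_unique {B : Set α} {r r' : α} (h : IsRoot B r) (h' : IsRoot B r') : r = r' :=
  le_antisymm (h.2 _ h'.1) (h'.2 _ h.1)

lemma succIn_of_subset {B' B : Set α} (hsub : B' ⊆ B) {ν ρ : α}
    (hρ : ρ ∈ succIn B ν) (hρ' : ρ ∈ B') : ρ ∈ succIn B' ν := by
  refine ⟨hρ', hρ.2.1, ?_⟩
  rintro ⟨σ, hσ, h1, h2⟩
  exact hρ.2.2 ⟨σ, hsub hσ, h1, h2⟩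

/-- In a set all of whose chains are finite, above any element there is a maximal one. -/
lemma exists_max_above {S : Set α}
    (hchain : ∀ C, C ⊆ S → IsChain (· ≤ ·) C → C.Finite)
    {ν : α} (hν : ν ∈ S) : ∃ ν' ∈ S, ν ≤ ν' ∧ ∀ ρ ∈ S, ¬ν' < ρ := by
  obtain ⟨m, hm, hmax⟩ := zorn_le_nonempty₀ S (fun c hcS hc y hy => by
    have hfin : c.Finite := hchain c hcS hc
    obtain ⟨m, hm, hmx⟩ := hfin.exists_maximalFor id c ⟨y, hy⟩
    refine ⟨m, hcS hm, fun z hz => ?_⟩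
    rcases hc.total hz hm with h | h
    · exact h
    · exact hmx hz h) ν hν
  refine ⟨m, hmax.1, hm, fun ρ hρ hlt => ?_⟩
  exact absurd (hmax.2 hρ hlt.le) (not_le_of_gt hlt)

/-- A finite nonempty chain has a least element. -/
lemma chain_exists_min {S : Set α} (hfin : S.Finite) (hne : S.Nonempty)
    (hc : IsChain (· ≤ ·) S) : ∃ m ∈ S, ∀ z ∈ S, m ≤ z := by
  obtain ⟨m, hm, hmx⟩ := hfin.exists_minimalFor id S hne
  refine ⟨m, hm, fun z hz => ?_⟩
  rcases eq_or_ne m z with rfl | hne'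
  · exact le_rfl
  rcases hc hm hz hne' with h | h
  · exact h
  · exact hmx hz h

/-- A finite nonempty chain has a greatest element. -/
lemma chain_exists_max {S : Set α} (hfin : S.Finite) (hne : S.Nonempty)
    (hc : IsChain (· ≤ ·) S) : ∃ m ∈ S, ∀ z ∈ S, z ≤ m := by
  obtain ⟨m, hm, hmx⟩ := hfin.exists_maximalFor id S hne
  refine ⟨m, hm, fun z hz => ?_⟩
  rcases eq_or_ne z m with rfl | hne'
  · exact le_rfl
  rcases hc hz hm hne' with h | h
  · exact h
  · exact hmx hz h

lemma exists_succ_le {M B : Set α} (hB : CWT M B) {ν ρ : α} (_hν : ν ∈ B) (hρ : ρ ∈ B)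
    (h : ν < ρ) : ∃ σ ∈ succIn B ν, σ ≤ ρ := by
  set S : Set α := {σ | σ ∈ B ∧ ν < σ ∧ σ ≤ ρ} with hS
  have hSB : S ⊆ B := fun σ hσ => hσ.1
  have hchain : IsChain (· ≤ ·) S := by
    intro a ha b hb _
    exact hB.2.2.2.1 ρ hρ a ha.1 b hb.1 ha.2.2 hb.2.2
  have hfin : S.Finite := hB.2.2.2.2.1 S hSB hchain
  obtain ⟨σ, hσ, hmin⟩ := chain_exists_min hfin ⟨ρ, hρ, h, le_rfl⟩ hchain
  refine ⟨σ, ⟨hσ.1, hσ.2.1, ?_⟩, hσ.2.2⟩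
  rintro ⟨τ, hτ, h1, h2⟩
  have : τ ∈ S := ⟨hτ, h1, h2.le.trans hσ.2.2⟩
  exact absurd (hmin τ this) (not_le_of_gt h2)

lemma downward_closed {M B B' : Set α} {r : α} (hB : CWT M B) (hsub : B' ⊆ B)
    (hrB : IsRoot B r) (hrB' : IsRoot B' r)
    (hsucc : ∀ τ ∈ B', succIn B' τ ⊆ succIn B τ)
    {η ν : α} (hη : η ∈ B) (hν : ν ∈ B') (hle : η ≤ ν) : η ∈ B' := by
  set S : Set α := {ρ | ρ ∈ B' ∧ η ≤ ρ ∧ ρ ≤ ν} with hSdef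
  have hchainS : IsChain (· ≤ ·) S := fun a ha b hb _ =>
    hB.2.2.2.1 ν (hsub hν) a (hsub ha.1) b (hsub hb.1) ha.2.2 hb.2.2
  have hfinS : S.Finite := hB.2.2.2.2.1 S (fun ρ hρ => hsub hρ.1) hchainS
  obtain ⟨σ, hσS, hσmin⟩ := chain_exists_min hfinS ⟨ν, hν, hle, le_rfl⟩ hchainS
  rcases eq_or_ne η σ with rfl | hne
  · exact hσS.1
  have hησ : η < σ := lt_of_le_of_ne hσS.2.1 hne
  -- the set of elements of B' strictly below σ
  set T : Set α := {ρ | ρ ∈ B' ∧ ρ < σ} with hTdef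
  have hchainT : IsChain (· ≤ ·) T := fun a ha b hb _ =>
    hB.2.2.2.1 σ (hsub hσS.1) a (hsub ha.1) b (hsub hb.1) ha.2.le hb.2.le
  have hfinT : T.Finite := hB.2.2.2.2.1 T (fun ρ hρ => hsub hρ.1) hchainT
  have hrT : r ∈ T := ⟨hrB'.1, lt_of_le_of_lt (hrB.2 η hη) hησ⟩
  obtain ⟨τ, hτT, hτmax⟩ := chain_exists_max hfinT ⟨r, hrT⟩ hchainT
  have hτsucc : σ ∈ succIn B' τ := by
    refine ⟨hσS.1, hτT.2, ?_⟩
    rintro ⟨ρ, hρ, h1, h2⟩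
    exact absurd (hτmax ρ ⟨hρ, h2⟩) (not_le_of_gt h1)
  have hτsuccB : σ ∈ succIn B τ := hsucc τ hτT.1 hτsucc
  -- compare τ and η
  rcases hB.2.2.2.1 σ (hsub hσS.1) τ (hsub hτT.1) η hη hτT.2.le hησ.le with h | h
  · -- τ ≤ η
    rcases eq_or_ne τ η with rfl | hne'
    · exact hτT.1
    have : τ < η := lt_of_le_of_ne h hne'
    exact absurd ⟨η, hη, this, hησ⟩ hτsuccB.2.2
  · -- η ≤ τ : contradicts minimality of σ
    have : τ ∈ S := ⟨hτT.1, h, hτT.2.le.trans hσS.2.2⟩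
    exact absurd (hσmin τ this) (not_le_of_gt hτT.2)


lemma sb_dc {M B B' : Set α} (hB : CWT M B) (h : sb M B B') {η ν : α}
    (hη : η ∈ B) (hν : ν ∈ B') (hle : η ≤ ν) : η ∈ B' := by
  obtain ⟨r, hrB, hrB'⟩ := h.2.2.1
  exact downward_closed hB h.2.1 hrB hrB' (fun τ hτ => (h.2.2.2 τ hτ).1) hη hν hle

/-- The intersection of a "positive-like" subtree `P` of `B` with two exhaustive
subtrees of `B` is an exhaustive subtree of `P`. -/
lemma sbInter {M B P B₁' B₂' : Set α} {r : α}
    (hB : CWT M B) (hP : CWT M P) (hPB : P ⊆ B)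
    (hrB : IsRoot B r) (hrP : IsRoot P r)
    (hPsucc : ∀ ν ∈ P, succIn P ν ⊆ succIn B ν)
    (h1 : sb M B B₁') (h2 : sb M B B₂') :
    sb M P (P ∩ B₁' ∩ B₂') := by
  obtain ⟨r₁, hr₁B, hr₁⟩ := h1.2.2.1
  obtain ⟨r₂, hr₂B, hr₂⟩ := h2.2.2.1
  have hrr₁ : r₁ = r := root_unique hr₁B hrB
  have hrr₂ : r₂ = r := root_unique hr₂B hrB
  rw [hrr₁] at hr₁; rw [hrr₂] at hr₂
  set E : Set α := P ∩ B₁' ∩ B₂' with hEdef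
  have hEP : E ⊆ P := fun x hx => hx.1.1
  have hE1 : E ⊆ B₁' := fun x hx => hx.1.2
  have hE2 : E ⊆ B₂' := fun x hx => hx.2
  have hrE : IsRoot E r := ⟨⟨⟨hrP.1, hr₁.1⟩, hr₂.1⟩, fun x hx => hrP.2 x (hEP hx)⟩
  have key : ∀ ν ∈ E, succIn E ν = succIn P ν ∩ B₁' ∩ B₂' := by
    intro ν _
    ext ρ
    constructor
    · rintro ⟨hρE, hlt, hno⟩
      refine ⟨⟨⟨hρE.1.1, hlt, ?_⟩, hρE.1.2⟩, hρE.2⟩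
      rintro ⟨σ, hσP, h1', h2'⟩
      have hσ1 : σ ∈ B₁' := sb_dc hB h1 (hPB hσP) hρE.1.2 h2'.le
      have hσ2 : σ ∈ B₂' := sb_dc hB h2 (hPB hσP) hρE.2 h2'.le
      exact hno ⟨σ, ⟨⟨hσP, hσ1⟩, hσ2⟩, h1', h2'⟩
    · rintro ⟨⟨hρP, hρ1⟩, hρ2⟩
      exact succIn_of_subset hEP hρP ⟨⟨hρP.1, hρ1⟩, hρ2⟩
  have hsubsucc : ∀ ν ∈ E, succIn E ν ⊆ succIn P ν := by
    intro ν hν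
    rw [key ν hν]
    exact fun ρ hρ => hρ.1.1
  have hdiff : ∀ ν ∈ E, (succIn P ν \ succIn E ν).Finite := by
    intro ν hν
    have hfin1 := (h1.2.2.2 ν (hE1 hν)).2
    have hfin2 := (h2.2.2.2 ν (hE2 hν)).2
    refine Set.Finite.subset (hfin1.union hfin2) ?_
    rintro ρ ⟨hρP, hρnE⟩
    have hρB : ρ ∈ succIn B ν := hPsucc ν (hEP hν) hρP
    by_cases hρ1 : ρ ∈ B₁'
    · by_cases hρ2 : ρ ∈ B₂'
      · exact absurd ((key ν hν).symm ▸ (⟨⟨hρP, hρ1⟩, hρ2⟩ :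
          ρ ∈ succIn P ν ∩ B₁' ∩ B₂')) hρnE
      · exact Or.inr ⟨hρB, fun hc => hρ2 hc.1⟩
    · exact Or.inl ⟨hρB, fun hc => hρ1 hc.1⟩
  have hsuccE : ∀ ν ∈ E, succIn E ν = succIn P ν \ (succIn P ν \ succIn E ν) := by
    intro ν hν
    rw [Set.diff_diff_cancel_left (hsubsucc ν hν)]
  have hcwtE : CWT M E := by
    refine ⟨hEP.trans hP.1, hP.2.1.mono hEP, ⟨r, hrE⟩, ?_, ?_, ?_, ?_, ?_⟩
    · exact fun ν hν η hη ρ hρ => hP.2.2.2.1 ν (hEP hν) η (hEP hη) ρ (hEP hρ)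
    · exact fun C hC => hP.2.2.2.2.1 C (hC.trans hEP)
    · intro ν hν
      rcases hP.2.2.2.2.2.1 ν (hEP hν) with h | h
      · left
        have := hsubsucc ν hν
        rw [h] at this
        exact Set.subset_empty_iff.mp this
      · right
        rw [hsuccE ν hν]
        exact h.diff (hdiff ν hν)
    · exact fun η hη ν hν => hP.2.2.2.2.2.2.1 η (hEP hη) ν (hEP hν)
    · intro ν hν F hF
      obtain ⟨ρ₀, hρ₀E, hρ₀lt⟩ : ∃ ρ ∈ E, ν < ρ := by
        by_contra h
        push_neg at h
        exact hν.2 ⟨hν.1, h⟩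
      have hνP : ν ∈ P \ maxIn P := ⟨hEP hν.1, fun hc => hc.2 ρ₀ (hEP hρ₀E) hρ₀lt⟩
      have hinf := hP.2.2.2.2.2.2.2 ν hνP F hF
      refine Set.Infinite.mono ?_ (hinf.diff (hdiff ν hν.1))
      rintro ϱ ⟨⟨hϱP, hϱF⟩, hϱn⟩
      have hϱE : ϱ ∈ succIn E ν := by
        by_contra hc
        exact hϱn ⟨hϱP, hc⟩
      exact ⟨hϱE, hϱF⟩
  exact ⟨hcwtE, hEP, ⟨r, hrP, hrE⟩, fun ν hν => ⟨hsubsucc ν hν, hdiff ν hν⟩⟩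


lemma psb_succ_sub {M B P : Set α} (h : psb M B P) {ν : α} (hν : ν ∈ P) :
    succIn P ν ⊆ succIn B ν := by
  by_cases hmax : ν ∈ maxIn B
  · intro ρ hρ
    exact absurd hρ.2.1 (hmax.2 ρ (h.2.1 hρ.1))
  · exact (h.2.2.2 ν ⟨hν, hmax⟩).2

lemma witness_transfer {M B₁ B₁' B₃ Y Z : Set α}
    (hB₁ : CWT M B₁)
    (hsb1 : sb M B₁ B₁') (hAF : IsAlmostFront M B₁ Y)
    (hZ : B₁' ∩ Y ⊆ Z) (hls : leStar M B₁ B₃) :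
    ∃ E, sb M B₃ E ∧ IsAlmostFront M B₃ Y ∧ E ∩ Y ⊆ Z := by
  obtain ⟨-, -, -, C, hsbC, hpsb, htrans⟩ := hls
  set P := C ∩ B₁ with hPdef
  obtain ⟨D₁, hsbD₁, hfrontD₁⟩ := hAF.2.2
  obtain ⟨r, hrB₁, hrP⟩ := hpsb.2.2.1
  have hPsucc : ∀ ν ∈ P, succIn P ν ⊆ succIn B₁ ν := fun ν hν => psb_succ_sub hpsb hν
  have hE₁sb : sb M P (P ∩ B₁' ∩ D₁) :=
    sbInter hB₁ hpsb.1 hpsb.2.1 hrB₁ hrP hPsucc hsb1 hsbD₁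
  set E₁ := P ∩ B₁' ∩ D₁ with hE₁def
  have hE₁P : E₁ ⊆ P := hE₁sb.2.1
  have hE₁B₁ : E₁ ⊆ B₁ := fun x hx => hpsb.2.1 (hE₁P hx)
  have hfrontE₁ : IsFront E₁ (Y ∩ E₁) := by
    refine ⟨fun x hx => hx.2, fun η hη ν hν => hAF.2.1 η hη.1 ν hν.1, ?_⟩
    intro ν hν
    obtain ⟨ν', hν'E, hνν', hν'max⟩ :=
      exists_max_above (fun Cc hCc hc => hE₁sb.1.2.2.2.2.1 Cc hCc hc) hν
    have hsuccE₁ : succIn E₁ ν' = ∅ := by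
      rw [Set.eq_empty_iff_forall_notMem]
      intro ρ hρ
      exact hν'max ρ hρ.1 hρ.2.1
    have hPfin : (succIn P ν').Finite := by
      have h := (hE₁sb.2.2.2 ν' hν'E).2
      rw [hsuccE₁, Set.diff_empty] at h
      exact h
    have hν'maxB₁ : ∀ ρ ∈ B₁, ¬ν' < ρ := by
      intro ρ hρ hlt
      have hnm : ν' ∉ maxIn B₁ := fun hc => hc.2 ρ hρ hlt
      exact (hpsb.2.2.2 ν' ⟨hE₁P hν'E, hnm⟩).1 hPfin
    obtain ⟨η, hηYD₁, hcomp⟩ := hfrontD₁.2.2 ν' hν'E.2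
    have hηD₁ : η ∈ D₁ := hηYD₁.2
    have hηB₁ : η ∈ B₁ := hsbD₁.2.1 hηD₁
    have hηle : η ≤ ν' := by
      rcases hcomp with h | h
      · exact h
      · rcases eq_or_ne ν' η with rfl | hne
        · exact le_rfl
        · exact absurd (lt_of_le_of_ne h hne) (hν'maxB₁ η hηB₁)
    have hηP : η ∈ P :=
      downward_closed hB₁ hpsb.2.1 hrB₁ hrP (fun τ hτ => psb_succ_sub hpsb hτ)
        hηB₁ (hE₁P hν'E) hηle
    have hηB₁' : η ∈ B₁' := sb_dc hB₁ hsb1 hηB₁ hν'E.1.2 hηle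
    refine ⟨η, ⟨hηYD₁.1, ⟨⟨hηP, hηB₁'⟩, hηD₁⟩⟩, ?_⟩
    exact hB₁.2.2.2.1 ν' (hE₁B₁ hν'E) η hηB₁ ν (hE₁B₁ hν) hηle hνν'
  have hAFP : IsAlmostFront M P (Y ∩ E₁) := by
    refine ⟨fun x hx => hAF.1 hx.1, fun η hη ν hν => hAF.2.1 η hη.1 ν hν.1, E₁, hE₁sb, ?_⟩
    have heq : (Y ∩ E₁) ∩ E₁ = Y ∩ E₁ := by rw [Set.inter_assoc, Set.inter_self]
    rw [heq]
    exact hfrontE₁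
  have hAF3 := htrans (Y ∩ E₁) hAFP
  obtain ⟨E, hsbE, hfrontE⟩ := hAF3.2.2
  have hYE : Y ∩ E ⊆ (Y ∩ E₁) ∩ E := by
    rintro y ⟨hyY, hyE⟩
    obtain ⟨η, hη, hcomp⟩ := hfrontE.2.2 y hyE
    have hηY : η ∈ Y := hη.1.1
    rcases eq_or_ne η y with rfl | hne
    · exact hη
    · rcases hcomp with h | h
      · exact absurd h (hAF.2.1 η hηY y hyY hne)
      · exact absurd h (hAF.2.1 y hyY η hηY (Ne.symm hne))
  refine ⟨E, hsbE, ⟨hAF.1, hAF.2.1, E, hsbE, ?_⟩, ?_⟩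
  · refine ⟨fun x hx => hx.2, fun η hη ν hν => hAF.2.1 η hη.1 ν hν.1, ?_⟩
    intro ν hν
    obtain ⟨η, hη, hcomp⟩ := hfrontE.2.2 ν hν
    exact ⟨η, ⟨hη.1.1, hη.2⟩, hcomp⟩
  · rintro y ⟨hyE, hyY⟩
    have hy : y ∈ (Y ∩ E₁) ∩ E := hYE ⟨hyY, hyE⟩
    exact hZ ⟨hy.1.2.1.2, hyY⟩


end AuxLemmas

/-- for `x ∈ 𝐊` and `Y` an almost front of some `B ∈ ℬ_x`, the family
`D^x_Y` is a proper filter on `Y`. -/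
theorem D_isProperFilter [PartialOrder α] (x : KSys α) (B Y : Set α)
    (hB : B ∈ x.Bf) (hY : IsAlmostFront x.M B Y) :
    Y ∈ x.D Y ∧ ∅ ∉ x.D Y ∧
    (∀ Z₁ ∈ x.D Y, ∀ Z₂ ∈ x.D Y, Z₁ ∩ Z₂ ∈ x.D Y) ∧
    (∀ Z₁ ∈ x.D Y, ∀ Z₂, Z₁ ⊆ Z₂ → Z₂ ⊆ Y → Z₂ ∈ x.D Y) := by
  classical
  have hBcwt : CWT x.M B := x.A_cwt x.rt x.rt_mem B hB.1
  have hsbrefl : ∀ B₀ : Set α, CWT x.M B₀ → sb x.M B₀ B₀ := by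
    intro B₀ h
    obtain ⟨r, hr⟩ := h.2.2.1
    exact ⟨h, subset_rfl, ⟨r, hr, hr⟩, fun ν _ => ⟨subset_rfl, by simp⟩⟩
  simp only [KSys.D, Set.mem_setOf_eq]
  refine ⟨⟨subset_rfl, B, hB, B, hsbrefl B hBcwt, hY, fun y hy => hy.2⟩, ?_, ?_, ?_⟩
  · rintro ⟨-, B₀, hB₀f, B', hsb', hAF₀, hemp⟩
    have hB₀cwt : CWT x.M B₀ := x.A_cwt x.rt x.rt_mem B₀ hB₀f.1
    obtain ⟨D₀, hsbD₀, hfrontD₀⟩ := hAF₀.2.2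
    obtain ⟨r, hr⟩ := hB₀cwt.2.2.1
    have hEsb : sb x.M B₀ (B₀ ∩ B' ∩ D₀) :=
      sbInter hB₀cwt hB₀cwt subset_rfl hr hr (fun ν _ => subset_rfl) hsb' hsbD₀
    obtain ⟨rE, hrE₀, hrE⟩ := hEsb.2.2.1
    obtain ⟨ν, hνE, -, hνmax⟩ :=
      exists_max_above (fun C hC hc => hEsb.1.2.2.2.2.1 C hC hc) hrE.1
    have hsuccE : succIn (B₀ ∩ B' ∩ D₀) ν = ∅ := by
      rw [Set.eq_empty_iff_forall_notMem]
      intro ρ hρ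
      exact hνmax ρ hρ.1 hρ.2.1
    have hfin : (succIn B₀ ν).Finite := by
      have h := (hEsb.2.2.2 ν hνE).2
      rw [hsuccE, Set.diff_empty] at h
      exact h
    have hνmaxB₀ : ∀ ρ ∈ B₀, ¬ν < ρ := by
      intro ρ hρ hlt
      obtain ⟨σ, hσ, -⟩ := exists_succ_le hB₀cwt hνE.1.1 hρ hlt
      rcases hB₀cwt.2.2.2.2.2.1 ν hνE.1.1 with h0 | h0
      · rw [h0] at hσ
        exact hσ
      · exact h0 hfin
    obtain ⟨η, hηYD₀, hcomp⟩ := hfrontD₀.2.2 ν hνE.2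
    have hηB₀ : η ∈ B₀ := hsbD₀.2.1 hηYD₀.2
    have hηle : η ≤ ν := by
      rcases hcomp with h | h
      · exact h
      · rcases eq_or_ne ν η with rfl | hne
        · exact le_rfl
        · exact absurd (lt_of_le_of_ne h hne) (hνmaxB₀ η hηB₀)
    have hηB' : η ∈ B' := sb_dc hB₀cwt hsb' hηB₀ hνE.1.2 hηle
    exact hemp ⟨hηB', hηYD₀.1⟩
  · rintro Z₁ ⟨hZ₁Y, B₁, hB₁f, B₁', hsb₁, hAF₁, hsub₁⟩
      Z₂ ⟨hZ₂Y, B₂, hB₂f, B₂', hsb₂, hAF₂, hsub₂⟩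
    obtain ⟨B₃, hB₃f, h13, h23⟩ := x.lex_directed B₁ hB₁f B₂ hB₂f
    have hls₁ := x.lex_leStar B₁ B₃ h13
    have hls₂ := x.lex_leStar B₂ B₃ h23
    have hB₁cwt : CWT x.M B₁ := x.A_cwt x.rt x.rt_mem B₁ hB₁f.1
    have hB₂cwt : CWT x.M B₂ := x.A_cwt x.rt x.rt_mem B₂ hB₂f.1
    obtain ⟨E₁, hsbE₁, hAF₃, hE₁Z₁⟩ := witness_transfer hB₁cwt hsb₁ hAF₁ hsub₁ hls₁
    obtain ⟨E₂, hsbE₂, -, hE₂Z₂⟩ := witness_transfer hB₂cwt hsb₂ hAF₂ hsub₂ hls₂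
    have hB₃cwt : CWT x.M B₃ := x.A_cwt x.rt x.rt_mem B₃ hB₃f.1
    obtain ⟨r₃, hr₃⟩ := hB₃cwt.2.2.1
    have hsbI : sb x.M B₃ (B₃ ∩ E₁ ∩ E₂) :=
      sbInter hB₃cwt hB₃cwt subset_rfl hr₃ hr₃ (fun ν _ => subset_rfl) hsbE₁ hsbE₂
    refine ⟨fun y hy => hZ₁Y hy.1, B₃, hB₃f, B₃ ∩ E₁ ∩ E₂, hsbI, hAF₃, ?_⟩
    rintro y ⟨⟨⟨-, hyE₁⟩, hyE₂⟩, hyY⟩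
    exact ⟨hE₁Z₁ ⟨hyE₁, hyY⟩, hE₂Z₂ ⟨hyE₂, hyY⟩⟩
  · rintro Z₁ ⟨-, B₁, hB₁f, B₁', hsb₁, hAF₁, hsub₁⟩ Z₂ h12 hZ₂Y
    exact ⟨hZ₂Y, B₁, hB₁f, B₁', hsb₁, hAF₁, fun y hy => h12 (hsub₁ hy)⟩
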